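/- arXiv:2401.15598 — 2 statements merged into one kernel-verified Lean document; each statement's English description precedes it below -/
import Mathlib

section
/- Let f_i : ℝ → ℝ be differentiable, W a symmetric matrix with nonnegative entries, η > 0, α, β > 0, and x a differentiable trajectory of the dynamics ẋ_i = −η ∑_j W_{ij}(sgn^α(f_i'(x_i) − f_j'(x_j)) + sgn^β(f_i'(x_i) − f_j'(x_j))). Then along the trajectory, d/dt ∑_i f_i(x_i(t)) = −(η/2) ∑_{i,j} W_{ij}(|f_i'(x_i) − f_j'(x_j)|^{α+1} + |f_i'(x_i) − f_j'(x_j)|^{β+1}) ≤ 0, so F(x(t)) = ∑_i f_i(x_i(t)) is nonincreasing. -/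
noncomputable def sgnp (a u : ℝ) : ℝ := u * |u| ^ (a - 1)

lemma sgnp_neg (a u : ℝ) : sgnp a (-u) = -sgnp a u := by
  simp [sgnp, abs_neg]

lemma mul_sgnp (a : ℝ) (ha : 0 < a) (u : ℝ) : u * sgnp a u = |u| ^ (a + 1) := by
  rcases eq_or_ne u 0 with h | h
  · simp [h, sgnp, Real.zero_rpow (by linarith : a + 1 ≠ 0)]
  · have hu : 0 < |u| := abs_pos.mpr h
    have h2 : u * u = |u| * |u| := (abs_mul_abs_self u).symm
    calc u * sgnp a u = (|u| * |u|) * |u| ^ (a - 1) := by rw [sgnp, ← h2]; ring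
      _ = |u| ^ (a + 1) := by
          rw [show (a + 1) = 1 + 1 + (a - 1) by ring, Real.rpow_add hu,
            Real.rpow_add hu, Real.rpow_one]

theorem lyapunov_decrease (n : ℕ) (W : Fin n → Fin n → ℝ)
    (hW : ∀ i j, W i j = W j i) (hWpos : ∀ i j, 0 ≤ W i j)
    (f : Fin n → ℝ → ℝ) (hf : ∀ i, ContDiff ℝ 1 (f i))
    (α β η : ℝ) (hα : 0 < α) (hβ : 0 < β) (hη : 0 < η)
    (x : ℝ → Fin n → ℝ)
    (hdyn : ∀ t i, HasDerivAt (fun s => x s i)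
      (-η * ∑ j, W i j *
        (sgnp α (deriv (f i) (x t i) - deriv (f j) (x t j)) +
         sgnp β (deriv (f i) (x t i) - deriv (f j) (x t j)))) t) :
    (∀ t, HasDerivAt (fun s => ∑ i, f i (x s i))
      (-(η / 2) * ∑ i, ∑ j, W i j *
        (|deriv (f i) (x t i) - deriv (f j) (x t j)| ^ (α + 1) +
         |deriv (f i) (x t i) - deriv (f j) (x t j)| ^ (β + 1))) t) ∧
    (∀ t, -(η / 2) * ∑ i, ∑ j, W i j *
        (|deriv (f i) (x t i) - deriv (f j) (x t j)| ^ (α + 1) +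
         |deriv (f i) (x t i) - deriv (f j) (x t j)| ^ (β + 1)) ≤ 0) ∧
    Antitone (fun t => ∑ i, f i (x t i)) := by
  -- abbreviations
  have hnonpos : ∀ t, -(η / 2) * ∑ i, ∑ j, W i j *
      (|deriv (f i) (x t i) - deriv (f j) (x t j)| ^ (α + 1) +
       |deriv (f i) (x t i) - deriv (f j) (x t j)| ^ (β + 1)) ≤ 0 := by
    intro t
    have hB : 0 ≤ ∑ i, ∑ j, W i j *
        (|deriv (f i) (x t i) - deriv (f j) (x t j)| ^ (α + 1) +
         |deriv (f i) (x t i) - deriv (f j) (x t j)| ^ (β + 1)) := by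
      refine Finset.sum_nonneg fun i _ => Finset.sum_nonneg fun j _ => ?_
      exact mul_nonneg (hWpos i j)
        (add_nonneg (Real.rpow_nonneg (abs_nonneg _) _) (Real.rpow_nonneg (abs_nonneg _) _))
    nlinarith
  have hderiv : ∀ t, HasDerivAt (fun s => ∑ i, f i (x s i))
      (-(η / 2) * ∑ i, ∑ j, W i j *
        (|deriv (f i) (x t i) - deriv (f j) (x t j)| ^ (α + 1) +
         |deriv (f i) (x t i) - deriv (f j) (x t j)| ^ (β + 1))) t := by
    intro t
    set g : Fin n → ℝ := fun i => deriv (f i) (x t i) with hg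
    set S : Fin n → Fin n → ℝ := fun i j => sgnp α (g i - g j) + sgnp β (g i - g j) with hS
    have h1 : ∀ i : Fin n, HasDerivAt (fun s => f i (x s i))
        (g i * (-η * ∑ j, W i j * S i j)) t := by
      intro i
      exact (((hf i).differentiable one_ne_zero).differentiableAt.hasDerivAt).comp t (hdyn t i)
    have h2 := HasDerivAt.fun_sum (fun i (_ : i ∈ Finset.univ) => h1 i)
    have key : ∑ i, g i * (-η * ∑ j, W i j * S i j)
        = -(η / 2) * ∑ i, ∑ j, W i j *
          (|g i - g j| ^ (α + 1) + |g i - g j| ^ (β + 1)) := by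
      have hsw : (∑ i, ∑ j, W i j * (g i * S i j))
          = ∑ i, ∑ j, W j i * (g j * S j i) := Finset.sum_comm
      have hterm : ∀ i j, W i j * (g i * S i j) + W j i * (g j * S j i)
          = W i j * (|g i - g j| ^ (α + 1) + |g i - g j| ^ (β + 1)) := by
        intro i j
        have hSji : S j i = -S i j := by
          simp only [hS]
          rw [show g j - g i = -(g i - g j) by ring, sgnp_neg, sgnp_neg]
          ring
        rw [← hW i j, hSji]
        have hA := mul_sgnp α hα (g i - g j)
        have hB := mul_sgnp β hβ (g i - g j)
        simp only [hS] at *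
        linear_combination (W i j) * hA + (W i j) * hB
      have h2T : (∑ i, ∑ j, W i j * (g i * S i j)) * 2
          = ∑ i, ∑ j, W i j * (|g i - g j| ^ (α + 1) + |g i - g j| ^ (β + 1)) := by
        calc (∑ i, ∑ j, W i j * (g i * S i j)) * 2
            = (∑ i, ∑ j, W i j * (g i * S i j)) + ∑ i, ∑ j, W j i * (g j * S j i) := by
              rw [← hsw]; ring
          _ = ∑ i, ∑ j, (W i j * (g i * S i j) + W j i * (g j * S j i)) := by
              rw [← Finset.sum_add_distrib]
              exact Finset.sum_congr rfl fun i _ => (Finset.sum_add_distrib).symm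
          _ = _ := Finset.sum_congr rfl fun i _ => Finset.sum_congr rfl fun j _ => hterm i j
      have hL : ∑ i, g i * (-η * ∑ j, W i j * S i j)
          = -η * ∑ i, ∑ j, W i j * (g i * S i j) := by
        simp only [Finset.mul_sum]
        exact Finset.sum_congr rfl fun i _ => Finset.sum_congr rfl fun j _ => by ring
      rw [hL, ← h2T]; ring
    rw [key] at h2
    exact h2
  refine ⟨hderiv, hnonpos, ?_⟩
  have hdiff : Differentiable ℝ (fun t => ∑ i, f i (x t i)) :=
    fun t => (hderiv t).differentiableAt
  refine antitone_of_deriv_nonpos hdiff ?_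
  intro t
  rw [(hderiv t).deriv]
  exact hnonpos t
end

section
/- Let f_i : ℝ → ℝ be differentiable, W symmetric with nonnegative entries whose associated graph (edges where W_{ij} > 0) is connected, and η, α, β > 0. If x̂ ∈ ℝⁿ satisfies ∑_j W_{ij}(sgn^α(f_i'(x̂_i) − f_j'(x̂_j)) + sgn^β(f_i'(x̂_i) − f_j'(x̂_j))) = 0 for all i, then f_i'(x̂_i) = f_j'(x̂_j) for all i, j, i.e., the gradients reach consensus at any equilibrium. -/
lemma sgnp_nonneg (a u : ℝ) (hu : 0 ≤ u) : 0 ≤ sgnp a u :=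
  mul_nonneg hu (Real.rpow_nonneg (abs_nonneg u) _)

lemma sgnp_eq_zero (a u : ℝ) (hu : 0 ≤ u) (h : sgnp a u = 0) : u = 0 := by
  by_contra hne
  have hpos : 0 < u := lt_of_le_of_ne hu (Ne.symm hne)
  have : 0 < sgnp a u :=
    mul_pos hpos (Real.rpow_pos_of_pos (abs_pos.mpr hne) _)
  linarith

theorem equilibrium_gradient_consensus (n : ℕ) (W : Fin n → Fin n → ℝ)
    (hW : ∀ i j, W i j = W j i) (hWpos : ∀ i j, 0 ≤ W i j)
    (hconn : (SimpleGraph.fromRel (fun i j : Fin n => 0 < W i j)).Connected)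
    (f : Fin n → ℝ → ℝ) (hf : ∀ i, Differentiable ℝ (f i))
    (η α β : ℝ) (hη : 0 < η) (hα : 0 < α) (hβ : 0 < β)
    (xhat : Fin n → ℝ)
    (heq : ∀ i, ∑ j, W i j *
      (sgnp α (deriv (f i) (xhat i) - deriv (f j) (xhat j)) +
       sgnp β (deriv (f i) (xhat i) - deriv (f j) (xhat j))) = 0) :
    ∀ i j, deriv (f i) (xhat i) = deriv (f j) (xhat j) := by
  set g : Fin n → ℝ := fun i => deriv (f i) (xhat i) with hg
  -- key step: at a maximal vertex, all neighbors have equal value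
  have key : ∀ i : Fin n, (∀ l, g l ≤ g i) → ∀ j, 0 < W i j → g j = g i := by
    intro i hmax j hWij
    have hnn : ∀ k ∈ Finset.univ, 0 ≤ W i k *
        (sgnp α (g i - g k) + sgnp β (g i - g k)) := by
      intro k _
      have h1 : 0 ≤ g i - g k := sub_nonneg.mpr (hmax k)
      exact mul_nonneg (hWpos i k)
        (add_nonneg (sgnp_nonneg _ _ h1) (sgnp_nonneg _ _ h1))
    have hzero := (Finset.sum_eq_zero_iff_of_nonneg hnn).mp (heq i) j (Finset.mem_univ j)
    have h1 : 0 ≤ g i - g j := sub_nonneg.mpr (hmax j)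
    have hsum : sgnp α (g i - g j) + sgnp β (g i - g j) = 0 := by
      rcases mul_eq_zero.mp hzero with h | h
      · exact absurd h (ne_of_gt hWij)
      · exact h
    have hα0 : sgnp α (g i - g j) = 0 := by
      have := sgnp_nonneg α _ h1
      have := sgnp_nonneg β _ h1
      linarith
    have := sgnp_eq_zero α _ h1 hα0
    linarith
  -- spread along walks
  obtain ⟨i0⟩ := hconn.nonempty
  obtain ⟨i0, hi0⟩ := Finset.exists_max_image Finset.univ g ⟨i0, Finset.mem_univ i0⟩
  have hmax0 : ∀ l, g l ≤ g i0 := fun l => hi0.2 l (Finset.mem_univ l)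
  have spread : ∀ {a b : Fin n}
      (w : (SimpleGraph.fromRel (fun i j : Fin n => 0 < W i j)).Walk a b),
      (∀ l, g l ≤ g a) → g b = g a := by
    intro a b w
    induction w with
    | nil => intro _; rfl
    | @cons u v c h p ih =>
      intro hmax
      obtain ⟨hne, hor⟩ := h
      have hWuv : 0 < W u v := by
        rcases hor with h' | h'
        · exact h'
        · rw [hW]; exact h'
      have hgv : g v = g u := key u hmax v hWuv
      have hmaxv : ∀ l, g l ≤ g v := fun l => hgv ▸ hmax l
      rw [ih hmaxv, hgv]
  have hall : ∀ j, g j = g i0 := by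
    intro j
    obtain ⟨w⟩ := (hconn i0 j)
    exact spread w hmax0
  intro i j
  show g i = g j
  rw [hall i, hall j]
end
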